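/- Let k, n ≥ 1 be integers, b ≥ 0 an integer, and B ≥ 1 a real number. Suppose φ : (0,1)ᵏ → ℝⁿ is a map whose coordinate functions have continuous partial derivatives up to order b, all of modulus bounded by B on (0,1)ᵏ. Then for every multi-index i ∈ ℕ₀ⁿ and every multi-index α ∈ ℕ₀ᵏ with ℓ(α) ≤ b, one has sup_{z ∈ (0,1)ᵏ} |∂^α(φⁱ)(z)| ≤ B^{ℓ(i)} · ℓ(i)^{ℓ(α)}. -/

import Mathlib

/-- The open unit hypercube `(0,1)ᵏ ⊂ ℝᵏ`. -/
def unitCube (k : ℕ) : Set (Fin k → ℝ) := Set.univ.pi fun _ => Set.Ioo (0 : ℝ) 1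

/-- The iterated mixed partial derivative (within a set `S`) of `f : ℝᵏ → ℝ` along a
list of coordinate directions: `mixedPartialWithin S [j₁, …, j_l] f = ∂/∂X_{j₁} ⋯ ∂/∂X_{j_l} f`.
A multi-index `α` corresponds to any list in which the direction `j` occurs `α_j` times. -/
noncomputable def mixedPartialWithin {k : ℕ} (S : Set (Fin k → ℝ)) :
    List (Fin k) → ((Fin k → ℝ) → ℝ) → ((Fin k → ℝ) → ℝ)
  | [], f => f
  | j :: L, f => fun z => fderivWithin ℝ (mixedPartialWithin S L f) S z (Pi.single j 1)

lemma unitCube_isOpen (k : ℕ) : IsOpen (unitCube k) :=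
  isOpen_set_pi Set.finite_univ fun _ _ => isOpen_Ioo

lemma unitCube_uniqueDiffOn (k : ℕ) : UniqueDiffOn ℝ (unitCube k) :=
  (unitCube_isOpen k).uniqueDiffOn

/-- An elementary factor: a mixed partial of one coordinate function. -/
noncomputable def gfun {k n : ℕ} (φ : (Fin k → ℝ) → Fin n → ℝ)
    (p : List (Fin k) × Fin n) : (Fin k → ℝ) → ℝ :=
  mixedPartialWithin (unitCube k) p.1 fun z => φ z p.2

lemma gfun_cons {k n : ℕ} (φ : (Fin k → ℝ) → Fin n → ℝ) (j : Fin k) (L : List (Fin k))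
    (t : Fin n) (z : Fin k → ℝ) :
    gfun φ (j :: L, t) z
      = fderivWithin ℝ (gfun φ (L, t)) (unitCube k) z (Pi.single j 1) := rfl

/-- Product rule for a product of elementary factors. -/
lemma step_lemma {k n b : ℕ} (φ : (Fin k → ℝ) → Fin n → ℝ)
    (hdiff : ∀ (t : Fin n) (L : List (Fin k)), L.length < b →
      DifferentiableOn ℝ (mixedPartialWithin (unitCube k) L fun z => φ z t) (unitCube k))
    {z : Fin k → ℝ} (hz : z ∈ unitCube k) {m : ℕ}
    (P : Fin m → List (Fin k) × Fin n) (hP : ∀ s, (P s).1.length < b) (j : Fin k) :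
    fderivWithin ℝ (fun w => ∏ s, gfun φ (P s) w) (unitCube k) z (Pi.single j 1)
      = ∑ s : Fin m, ∏ t : Fin m,
          gfun φ (Function.update P s (j :: (P s).1, (P s).2) t) z := by
  have hd : ∀ s : Fin m, DifferentiableWithinAt ℝ (gfun φ (P s)) (unitCube k) z :=
    fun s => (hdiff (P s).2 (P s).1 (hP s)) z hz
  rw [fderivWithin_finset_prod (𝕜 := ℝ) (g := fun s => gfun φ (P s))
    (unitCube_uniqueDiffOn k z hz) (fun s _ => hd s)]
  simp only [ContinuousLinearMap.sum_apply, ContinuousLinearMap.smul_apply, smul_eq_mul]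
  refine Finset.sum_congr rfl fun s _ => ?_
  have hupd : (fun t => gfun φ (Function.update P s (j :: (P s).1, (P s).2) t) z)
      = Function.update (fun t => gfun φ (P t) z) s
          (fderivWithin ℝ (gfun φ (P s)) (unitCube k) z (Pi.single j 1)) := by
    funext t
    rcases eq_or_ne t s with rfl | h
    · simp only [Function.update_self]
      rfl
    · simp [Function.update_of_ne h]
  calc (∏ t ∈ Finset.univ.erase s, gfun φ (P t) z) *
        fderivWithin ℝ (gfun φ (P s)) (unitCube k) z (Pi.single j 1)
      = fderivWithin ℝ (gfun φ (P s)) (unitCube k) z (Pi.single j 1) *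
        ∏ t ∈ Finset.univ \ {s}, gfun φ (P t) z := by
        rw [mul_comm, Finset.sdiff_singleton_eq_erase]
    _ = ∏ t, Function.update (fun t => gfun φ (P t) z) s
          (fderivWithin ℝ (gfun φ (P s)) (unitCube k) z (Pi.single j 1)) t := by
        rw [Finset.prod_update_of_mem (Finset.mem_univ s)]
    _ = _ := by rw [hupd]

/-- Representation of a mixed partial of a product of `m` elementary factors
as a sum of `m ^ (length of the multi-index)` products of elementary factors. -/
lemma rep_lemma {k n b : ℕ} (φ : (Fin k → ℝ) → Fin n → ℝ)
    (hdiff : ∀ (t : Fin n) (L : List (Fin k)), L.length < b →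
      DifferentiableOn ℝ (mixedPartialWithin (unitCube k) L fun z => φ z t) (unitCube k))
    (m : ℕ) (L : List (Fin k)) :
    ∀ (P : Fin m → List (Fin k) × Fin n), (∀ s, (P s).1.length + L.length ≤ b) →
    ∃ T : Fin (m ^ L.length) → Fin m → List (Fin k) × Fin n,
      (∀ q s, (T q s).1.length ≤ (P s).1.length + L.length) ∧
      ∀ z ∈ unitCube k,
        mixedPartialWithin (unitCube k) L (fun w => ∏ s, gfun φ (P s) w) z
          = ∑ q, ∏ s, gfun φ (T q s) z := by
  induction L with
  | nil =>
    intro P _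
    refine ⟨fun _ => P, fun q s => by simp, fun z hz => ?_⟩
    show (∏ s, gfun φ (P s) z) = _
    rw [Finset.sum_const, Finset.card_univ, Fintype.card_fin, List.length_nil, pow_zero, one_smul]
  | cons j L' ih =>
    intro P hP
    obtain ⟨T', hlen, heq⟩ := ih P (fun s => by have := hP s; simp at this ⊢; omega)
    set e : Fin (m ^ (j :: L').length) ≃ Fin (m ^ L'.length) × Fin m :=
      (finCongr (by rw [List.length_cons, pow_succ])).trans finProdFinEquiv.symm with he
    set F : Fin (m ^ L'.length) × Fin m → Fin m → List (Fin k) × Fin n :=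
      fun p => Function.update (T' p.1) p.2
        (j :: (T' p.1 p.2).1, (T' p.1 p.2).2) with hF
    refine ⟨fun q => F (e q), ?_, ?_⟩
    · intro q s
      have hb := hlen (e q).1 s
      have hb2 := hlen (e q).1 (e q).2
      simp only [hF, Function.update_apply, List.length_cons]
      split_ifs with hsq
      · subst hsq
        simp only [List.length_cons]
        omega
      · omega
    · intro z hz
      have hd : ∀ q : Fin (m ^ L'.length), DifferentiableWithinAt ℝ
          (fun w => ∏ s, gfun φ (T' q s) w) (unitCube k) z := by
        intro q
        refine (HasFDerivWithinAt.finset_prod (fun s _ =>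
          (((hdiff (T' q s).2 (T' q s).1 (by
            have h1 := hlen q s; have h2 := hP s
            simp at h2; omega)) z hz).hasFDerivWithinAt))).differentiableWithinAt
      have h0 : mixedPartialWithin (unitCube k) (j :: L')
            (fun w => ∏ s, gfun φ (P s) w) z
          = fderivWithin ℝ (fun w => ∑ q, ∏ s, gfun φ (T' q s) w)
              (unitCube k) z (Pi.single j 1) := by
        show fderivWithin ℝ (mixedPartialWithin (unitCube k) L'
            (fun w => ∏ s, gfun φ (P s) w)) (unitCube k) z (Pi.single j 1) = _
        rw [fderivWithin_congr (fun y hy => heq y hy) (heq z hz)]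
      rw [h0, fderivWithin_fun_sum (unitCube_uniqueDiffOn k z hz) (fun q _ => hd q),
        ContinuousLinearMap.sum_apply]
      have h1 : ∀ q : Fin (m ^ L'.length),
          fderivWithin ℝ (fun w => ∏ s, gfun φ (T' q s) w) (unitCube k) z (Pi.single j 1)
            = ∑ s : Fin m, ∏ t : Fin m,
                gfun φ (Function.update (T' q) s (j :: (T' q s).1, (T' q s).2) t) z := by
        intro q
        refine step_lemma φ hdiff hz (T' q) (fun s => ?_) j
        have h1 := hlen q s; have h2 := hP s
        simp at h2; omega
      calc (∑ q, fderivWithin ℝ (fun w => ∏ s, gfun φ (T' q s) w)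
              (unitCube k) z (Pi.single j 1))
          = ∑ q, ∑ s : Fin m, ∏ t, gfun φ (F (q, s) t) z :=
            Finset.sum_congr rfl fun q _ => h1 q
        _ = ∑ p : Fin (m ^ L'.length) × Fin m, ∏ t, gfun φ (F p t) z :=
            (Fintype.sum_prod_type (f := fun p => ∏ t, gfun φ (F p t) z)).symm
        _ = ∑ q, ∏ t, gfun φ (F (e q) t) z :=
            (Equiv.sum_comp e fun p => ∏ t, gfun φ (F p t) z).symm

theorem mixed_partial_of_monomial_bound (k n b : ℕ) (hk : 1 ≤ k) (hn : 1 ≤ n)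
    (B : ℝ) (hB : 1 ≤ B) (φ : (Fin k → ℝ) → Fin n → ℝ)
    (hdiff : ∀ (t : Fin n) (L : List (Fin k)), L.length < b →
      DifferentiableOn ℝ (mixedPartialWithin (unitCube k) L fun z => φ z t) (unitCube k))
    (hcont : ∀ (t : Fin n) (L : List (Fin k)), L.length ≤ b →
      ContinuousOn (mixedPartialWithin (unitCube k) L fun z => φ z t) (unitCube k))
    (hbound : ∀ (t : Fin n) (L : List (Fin k)), L.length ≤ b →
      ∀ z ∈ unitCube k, |mixedPartialWithin (unitCube k) L (fun z => φ z t) z| ≤ B) :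
    ∀ (i : Fin n → ℕ) (L : List (Fin k)), L.length ≤ b → ∀ z ∈ unitCube k,
      |mixedPartialWithin (unitCube k) L (fun z => ∏ t, φ z t ^ i t) z| ≤
        B ^ (∑ t, i t) * ((∑ t, i t : ℕ) : ℝ) ^ L.length := by
  intro i L hL z hz
  set m : ℕ := ∑ t, i t with hm
  have hB0 : (0 : ℝ) ≤ B := le_trans zero_le_one hB
  -- a map listing each coordinate `t` with multiplicity `i t`
  have hcard : Fintype.card (Σ t : Fin n, Fin (i t)) = m := by
    simp [Fintype.card_sigma, hm]
  set e : (Σ t : Fin n, Fin (i t)) ≃ Fin m := Fintype.equivFinOfCardEq hcard with he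
  set c : Fin m → Fin n := fun s => (e.symm s).1 with hc
  have hprod : ∀ w : Fin k → ℝ, (∏ t, φ w t ^ i t) = ∏ s : Fin m, gfun φ ([], c s) w := by
    intro w
    have : (∏ s : Fin m, φ w (c s)) = ∏ p : Σ t : Fin n, Fin (i t), φ w p.1 :=
      Equiv.prod_comp e.symm fun p => φ w p.1
    rw [show (∏ s : Fin m, gfun φ ([], c s) w) = ∏ s : Fin m, φ w (c s) from rfl, this,
      ← Finset.univ_sigma_univ, Finset.prod_sigma]
    simp
  have hfun : (fun w => ∏ t, φ w t ^ i t) = fun w => ∏ s : Fin m, gfun φ ([], c s) w :=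
    funext hprod
  rw [hfun]
  obtain ⟨T, hlen, heq⟩ := rep_lemma (b := b) φ hdiff m L (fun s => ([], c s))
    (fun s => by simpa using hL)
  rw [heq z hz]
  have hterm : ∀ q, |∏ s, gfun φ (T q s) z| ≤ B ^ m := by
    intro q
    rw [Finset.abs_prod]
    calc (∏ s, |gfun φ (T q s) z|) ≤ ∏ _s : Fin m, B := by
          refine Finset.prod_le_prod (fun _ _ => abs_nonneg _) fun s _ => ?_
          refine hbound (T q s).2 (T q s).1 ?_ z hz
          have h1 := hlen q s; simp at h1; omega
      _ = B ^ m := by rw [Finset.prod_const, Finset.card_univ, Fintype.card_fin]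
  calc |∑ q, ∏ s, gfun φ (T q s) z| ≤ ∑ q, |∏ s, gfun φ (T q s) z| :=
        Finset.abs_sum_le_sum_abs _ _
    _ ≤ ∑ _q : Fin (m ^ L.length), B ^ m := Finset.sum_le_sum fun q _ => hterm q
    _ = (m ^ L.length : ℕ) * B ^ m := by
        rw [Finset.sum_const, Finset.card_univ, Fintype.card_fin, nsmul_eq_mul]
    _ = B ^ m * (m : ℝ) ^ L.length := by push_cast; ring
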